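/- Suppose for each t < T, E[R_{t+1,*} − R_{t+1,A_t}]_+² ≤ Γ̄ · I(R_{t+2:∞}; A_t, R_{t+1,A_t} | H_t), and ∑_{t=0}^{T−1} I(R_{t+2:∞}; A_t, R_{t+1,A_t} | H_t) ≤ ∑_{t=0}^{T−1} Δ_t. Then the regret ∑_{t=0}^{T−1} E[R_{t+1,*} − R_{t+1,A_t}] ≤ sqrt(Γ̄ · T · ∑_{t=0}^{T−1} Δ_t). -/
import Mathlib

open Finset Real

theorem regret_le_sqrt
    (T : ℕ) (reg info Δ : ℕ → ℝ) (Γ : ℝ)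
    (hΓ : 0 ≤ Γ)
    (hinfo : ∀ t < T, 0 ≤ info t)
    (hΔ : ∀ t < T, 0 ≤ Δ t)
    (hratio : ∀ t < T, (max (reg t) 0) ^ 2 ≤ Γ * info t)
    (hsum : ∑ t ∈ Finset.range T, info t ≤ ∑ t ∈ Finset.range T, Δ t) :
    ∑ t ∈ Finset.range T, reg t ≤
      Real.sqrt (Γ * T * ∑ t ∈ Finset.range T, Δ t) := by
  have h1 : ∑ t ∈ Finset.range T, reg t ≤ ∑ t ∈ Finset.range T, max (reg t) 0 :=
    Finset.sum_le_sum fun t _ => le_max_left _ _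
  have h2 : (∑ t ∈ Finset.range T, max (reg t) 0) ^ 2
      ≤ (T : ℝ) * ∑ t ∈ Finset.range T, (max (reg t) 0) ^ 2 := by
    have := sq_sum_le_card_mul_sum_sq (s := Finset.range T)
      (f := fun t => max (reg t) 0)
    simpa using this
  have h3 : ∑ t ∈ Finset.range T, (max (reg t) 0) ^ 2
      ≤ Γ * ∑ t ∈ Finset.range T, Δ t := by
    calc ∑ t ∈ Finset.range T, (max (reg t) 0) ^ 2
        ≤ ∑ t ∈ Finset.range T, Γ * info t :=
          Finset.sum_le_sum fun t ht => hratio t (Finset.mem_range.mp ht)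
      _ = Γ * ∑ t ∈ Finset.range T, info t := by rw [Finset.mul_sum]
      _ ≤ Γ * ∑ t ∈ Finset.range T, Δ t := by
          exact mul_le_mul_of_nonneg_left hsum hΓ
  have hnn : 0 ≤ ∑ t ∈ Finset.range T, max (reg t) 0 :=
    Finset.sum_nonneg fun t _ => le_max_right _ _
  have h4 : (∑ t ∈ Finset.range T, max (reg t) 0) ^ 2
      ≤ Γ * T * ∑ t ∈ Finset.range T, Δ t := by
    calc (∑ t ∈ Finset.range T, max (reg t) 0) ^ 2
        ≤ (T : ℝ) * ∑ t ∈ Finset.range T, (max (reg t) 0) ^ 2 := h2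
      _ ≤ (T : ℝ) * (Γ * ∑ t ∈ Finset.range T, Δ t) :=
          mul_le_mul_of_nonneg_left h3 (Nat.cast_nonneg T)
      _ = Γ * T * ∑ t ∈ Finset.range T, Δ t := by ring
  calc ∑ t ∈ Finset.range T, reg t ≤ ∑ t ∈ Finset.range T, max (reg t) 0 := h1
    _ ≤ Real.sqrt (Γ * T * ∑ t ∈ Finset.range T, Δ t) :=
        by rw [show (∑ t ∈ Finset.range T, max (reg t) 0) = Real.sqrt ((∑ t ∈ Finset.range T, max (reg t) 0)^2) from (Real.sqrt_sq hnn).symm]; exact Real.sqrt_le_sqrt h4
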